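/- Let A be a symmetric n×n real matrix and μ₀ ∈ ℝ. Then trace(A · T_r^∞(μ₀, A)) = (r+1)·σ_{r+1}^∞(μ₀, A) − μ₀·σ_r^∞(μ₀, A). -/

import Mathlib

/-- The `k`-th elementary symmetric polynomial of `μ₁, ..., μₙ`
(with `σ₀ = 1` and `σ_k = 0` for `k > n`). -/
noncomputable def esymmVec {n : ℕ} (μ : Fin n → ℝ) (k : ℕ) : ℝ :=
  ∑ s ∈ Finset.univ.powersetCard k, ∏ i ∈ s, μ i

/-- The `r`-th weighted elementary symmetric polynomial
`σ_r^∞(μ₀, μ) = Σ_{j=0}^r (μ₀^j / j!) σ_{r-j}(μ)`. -/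
noncomputable def wsigma {n : ℕ} (μ₀ : ℝ) (μ : Fin n → ℝ) (r : ℕ) : ℝ :=
  ∑ j ∈ Finset.range (r + 1), μ₀ ^ j / (Nat.factorial j : ℝ) * esymmVec μ (r - j)

/-- The classical `r`-th Newton transformation
`T_r(A) = Σ_{j=0}^r (-1)^j σ_{r-j}(A) A^j` of a symmetric real matrix `A`,
where `σ_k(A)` is the `k`-th elementary symmetric polynomial of the eigenvalues of `A`. -/
noncomputable def cNewton {n : ℕ} (A : Matrix (Fin n) (Fin n) ℝ) (hA : A.IsHermitian)
    (r : ℕ) : Matrix (Fin n) (Fin n) ℝ :=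
  ∑ j ∈ Finset.range (r + 1), ((-1 : ℝ) ^ j * esymmVec hA.eigenvalues (r - j)) • A ^ j

/-- The `r`-th weighted Newton transformation
`T_r^∞(μ₀, A) = Σ_{j=0}^r (-1)^j σ_{r-j}^∞(μ₀, A) A^j` of a symmetric real matrix `A`. -/
noncomputable def wNewton {n : ℕ} (μ₀ : ℝ) (A : Matrix (Fin n) (Fin n) ℝ)
    (hA : A.IsHermitian) (r : ℕ) : Matrix (Fin n) (Fin n) ℝ :=
  ∑ j ∈ Finset.range (r + 1), ((-1 : ℝ) ^ j * wsigma μ₀ hA.eigenvalues (r - j)) • A ^ j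

lemma trace_pow_aux {n : ℕ} (A U : Matrix (Fin n) (Fin n) ℝ) (d : Fin n → ℝ)
    (hU1 : star U * U = 1) (hU2 : U * star U = 1)
    (hs : A = U * Matrix.diagonal d * star U) (m : ℕ) :
    (A ^ m).trace = ∑ i, d i ^ m := by
  have key : ∀ m, A ^ m = U * (Matrix.diagonal d) ^ m * star U := by
    intro m
    induction m with
    | zero => simp [hU2]
    | succ k ih =>
      rw [pow_succ, ih, pow_succ, hs,
        show U * Matrix.diagonal d ^ k * star U * (U * Matrix.diagonal d * star U)
          = U * Matrix.diagonal d ^ k * (star U * U) * Matrix.diagonal d * star U by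
          noncomm_ring,
        hU1]
      noncomm_ring
  rw [key m, Matrix.trace_mul_cycle, hU1, one_mul,
    Matrix.diagonal_pow, Matrix.trace_diagonal]
  simp [Pi.pow_apply]

lemma trace_pow {n : ℕ} (A : Matrix (Fin n) (Fin n) ℝ) (hA : A.IsHermitian) (m : ℕ) :
    (A ^ m).trace = ∑ i, hA.eigenvalues i ^ m := by
  refine trace_pow_aux A (Matrix.IsHermitian.eigenvectorUnitary hA : Matrix (Fin n) (Fin n) ℝ)
    hA.eigenvalues
    (Matrix.mem_unitaryGroup_iff'.mp (Matrix.IsHermitian.eigenvectorUnitary hA).2)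
    (Matrix.mem_unitaryGroup_iff.mp (Matrix.IsHermitian.eigenvectorUnitary hA).2) ?_ m
  have hs := hA.spectral_theorem
  simpa [Function.id_comp] using hs

lemma eval_esymm {n : ℕ} (μ : Fin n → ℝ) (k : ℕ) :
    MvPolynomial.eval μ (MvPolynomial.esymm (Fin n) ℝ k) = esymmVec μ k := by
  simp [MvPolynomial.esymm, esymmVec, MvPolynomial.eval_sum, MvPolynomial.eval_prod]

lemma eval_psum {n : ℕ} (μ : Fin n → ℝ) (k : ℕ) :
    MvPolynomial.eval μ (MvPolynomial.psum (Fin n) ℝ k) = ∑ i, μ i ^ k := by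
  simp [MvPolynomial.psum, MvPolynomial.eval_sum]

lemma newton_scalar {n : ℕ} (μ : Fin n → ℝ) (m : ℕ) :
    ∑ l ∈ Finset.range (m + 1), (-1 : ℝ) ^ l * esymmVec μ (m - l) * (∑ i, μ i ^ (l + 1))
      = (m + 1 : ℝ) * esymmVec μ (m + 1) := by
  have h := congrArg (MvPolynomial.eval μ) (MvPolynomial.mul_esymm_eq_sum (Fin n) ℝ (m + 1))
  simp only [MvPolynomial.eval_mul, MvPolynomial.eval_pow, map_natCast, map_one, map_neg,
    MvPolynomial.eval_sum, eval_esymm, eval_psum] at h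
  push_cast at h
  -- h : (m+1) * esymmVec μ (m+1) = (-1)^(m+2) * ∑ a ∈ filter ..., ...
  rw [h]
  have hfilter : (Finset.HasAntidiagonal.antidiagonal (m + 1) : Finset (ℕ × ℕ)).filter (fun a => a.1 < m + 1)
      = (Finset.range (m + 1)).image (fun i => (i, m + 1 - i)) := by
    ext ⟨a, b⟩
    simp only [Finset.mem_filter, Finset.HasAntidiagonal.mem_antidiagonal, Finset.mem_image,
      Finset.mem_range]
    constructor
    · rintro ⟨hab, ha⟩; exact ⟨a, by omega, by rw [Prod.ext_iff]; constructor <;> simp <;> omega⟩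
    · rintro ⟨i, hi, h2⟩; cases h2; omega
  rw [hfilter, Finset.sum_image (by intro x hx y hy hxy; simpa using congrArg Prod.fst hxy)]
  -- now: ∑ l, (-1)^l e(m-l) p(l+1) = (-1)^(m+2) * ∑ i ∈ range (m+1), (-1)^i e(i) p(m+1-i)
  rw [← Finset.sum_range_reflect (fun i => (-1 : ℝ) ^ i * esymmVec μ i * ∑ j, μ j ^ (m + 1 - i)) (m + 1)]
  rw [Finset.mul_sum]
  refine Finset.sum_congr rfl fun l hl => ?_
  simp only [Finset.mem_range] at hl
  have hl' : l ≤ m := by omega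
  have h1 : m + 1 - 1 - l = m - l := by omega
  have h2 : m + 1 - (m - l) = l + 1 := by omega
  rw [h1, h2]
  have hsign : (-1 : ℝ) ^ (m + 2) * (-1 : ℝ) ^ (m - l) = (-1) ^ l := by
    have : (-1 : ℝ) ^ (m + 2) * (-1 : ℝ) ^ (m - l) * (-1 : ℝ) ^ l
        = (-1 : ℝ) ^ (m + 2 + (m - l) + l) := by rw [← pow_add, ← pow_add]
    have he : m + 2 + (m - l) + l = 2 * (m + 1) := by omega
    rw [he] at this
    have h4 : (-1 : ℝ) ^ (2 * (m + 1)) = 1 := by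
      rw [pow_mul]; norm_num
    have h5 : (-1 : ℝ) ^ l * (-1 : ℝ) ^ l = 1 := by
      rw [← pow_add]; exact Even.neg_one_pow ⟨l, by ring⟩
    have h6 : ((-1 : ℝ) ^ (m + 2) * (-1) ^ (m - l)) * (-1) ^ l = (-1 : ℝ) ^ l * (-1) ^ l := by
      rw [this, he] at *; rw [h4, h5]
    exact mul_right_cancel₀ (pow_ne_zero l (by norm_num : (-1 : ℝ) ≠ 0)) h6
  calc (-1 : ℝ) ^ l * esymmVec μ (m - l) * ∑ i, μ i ^ (l + 1)
      = ((-1 : ℝ) ^ (m + 2) * (-1 : ℝ) ^ (m - l)) * esymmVec μ (m - l) * ∑ i, μ i ^ (l + 1) := by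
        rw [hsign]
    _ = (-1 : ℝ) ^ (m + 2) * ((-1 : ℝ) ^ (m - l) * esymmVec μ (m - l) * ∑ i, μ i ^ (l + 1)) := by
        ring

lemma triangle_swap {M : Type*} [AddCommMonoid M] (N : ℕ) (f : ℕ → ℕ → M) :
    ∑ j ∈ Finset.range N, ∑ k ∈ Finset.range (N - j), f j k
      = ∑ k ∈ Finset.range N, ∑ j ∈ Finset.range (N - k), f j k := by
  rw [Finset.sum_sigma', Finset.sum_sigma']
  refine Finset.sum_nbij' (fun x => ⟨x.2, x.1⟩) (fun x => ⟨x.2, x.1⟩) ?_ ?_ (fun _ _ => rfl)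
    (fun _ _ => rfl) (fun _ _ => rfl) <;>
  simp only [Finset.mem_range, Sigma.forall, Finset.mem_sigma] <;>
  rintro a b ⟨h₁, h₂⟩ <;> omega

/-- `trace(A · T_r^∞(μ₀, A)) = (r+1)·σ_{r+1}^∞(μ₀, A) − μ₀·σ_r^∞(μ₀, A)`. -/
theorem trace_mul_wNewton {n : ℕ} (μ₀ : ℝ) (A : Matrix (Fin n) (Fin n) ℝ)
    (hA : A.IsHermitian) (r : ℕ) :
    (A * wNewton μ₀ A hA r).trace =
      (r + 1 : ℝ) * wsigma μ₀ hA.eigenvalues (r + 1) - μ₀ * wsigma μ₀ hA.eigenvalues r := by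
  set μ := hA.eigenvalues with hμ
  have hLHS : (A * wNewton μ₀ A hA r).trace
      = ∑ j ∈ Finset.range (r + 1),
          (-1 : ℝ) ^ j * wsigma μ₀ μ (r - j) * ∑ i, μ i ^ (j + 1) := by
    rw [wNewton, Finset.mul_sum]
    rw [Matrix.trace_sum]
    refine Finset.sum_congr rfl fun j hj => ?_
    rw [Matrix.mul_smul, Matrix.trace_smul, ← pow_succ', trace_pow A hA (j + 1)]
    rfl
  rw [hLHS]
  -- expand wsigma inside and swap
  have expand : ∑ j ∈ Finset.range (r + 1),
      (-1 : ℝ) ^ j * wsigma μ₀ μ (r - j) * ∑ i, μ i ^ (j + 1)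
      = ∑ j ∈ Finset.range (r + 1), ∑ k ∈ Finset.range (r + 1 - j),
          μ₀ ^ k / (Nat.factorial k : ℝ) *
            ((-1 : ℝ) ^ j * esymmVec μ (r - k - j) * ∑ i, μ i ^ (j + 1)) := by
    refine Finset.sum_congr rfl fun j hj => ?_
    simp only [Finset.mem_range] at hj
    rw [wsigma]
    have : r - j + 1 = r + 1 - j := by omega
    rw [this, mul_comm ((-1 : ℝ) ^ j), mul_assoc, Finset.sum_mul]
    refine Finset.sum_congr rfl fun k hk => ?_
    have h2 : r - j - k = r - k - j := by omega
    rw [h2]; ring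
  rw [expand]
  rw [triangle_swap (r + 1)]
  -- inner sum is the classical Newton identity
  have inner : ∀ k ∈ Finset.range (r + 1),
      ∑ j ∈ Finset.range (r + 1 - k),
          μ₀ ^ k / (Nat.factorial k : ℝ) *
            ((-1 : ℝ) ^ j * esymmVec μ (r - k - j) * ∑ i, μ i ^ (j + 1))
      = μ₀ ^ k / (Nat.factorial k : ℝ) * ((r - k + 1 : ℝ) * esymmVec μ (r - k + 1)) := by
    intro k hk
    simp only [Finset.mem_range] at hk
    rw [← Finset.mul_sum]
    have : r + 1 - k = (r - k) + 1 := by omega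
    rw [this, newton_scalar μ (r - k)]
    have : ((r - k : ℕ) : ℝ) = (r : ℝ) - k := by
      have : k ≤ r := by omega
      push_cast [this]; ring
    rw [this]
  rw [Finset.sum_congr rfl inner]
  -- now pure algebra with wsigma on RHS
  rw [wsigma, wsigma, Finset.mul_sum, Finset.mul_sum]
  -- RHS second sum: reindex
  have hshift : ∑ k ∈ Finset.range (r + 1),
      μ₀ * (μ₀ ^ k / (Nat.factorial k : ℝ) * esymmVec μ (r - k))
      = ∑ k ∈ Finset.range (r + 2),
          (k : ℝ) * (μ₀ ^ k / (Nat.factorial k : ℝ)) * esymmVec μ (r + 1 - k) := by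
    rw [Finset.sum_range_succ' (fun k => (k : ℝ) * (μ₀ ^ k / (Nat.factorial k : ℝ)) * esymmVec μ (r + 1 - k)) (r+1)]
    simp only [Nat.cast_zero, zero_mul, zero_mul, add_zero, Nat.cast_succ]
    refine Finset.sum_congr rfl fun k hk => ?_
    have h1 : r + 1 - (k + 1) = r - k := by omega
    rw [h1, Nat.factorial_succ]
    push_cast
    have h2 : ((k : ℝ) + 1) ≠ 0 := by positivity
    have h3 : ((Nat.factorial k : ℝ)) ≠ 0 := by positivity
    field_simp
    ring
  rw [hshift]
  rw [Finset.sum_range_succ (fun k => ((r : ℝ) + 1) * (μ₀ ^ k / (Nat.factorial k : ℝ) * esymmVec μ (r + 1 - k))) (r + 1)]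
  rw [Finset.sum_range_succ (fun k => (k : ℝ) * (μ₀ ^ k / (Nat.factorial k : ℝ)) * esymmVec μ (r + 1 - k)) (r + 1)]
  rw [add_sub_add_comm]
  have hlast : ((r : ℝ) + 1) * (μ₀ ^ (r + 1) / (Nat.factorial (r + 1) : ℝ) * esymmVec μ (r + 1 - (r + 1)))
      - ((r + 1 : ℕ) : ℝ) * (μ₀ ^ (r + 1) / (Nat.factorial (r + 1) : ℝ)) * esymmVec μ (r + 1 - (r + 1)) = 0 := by
    push_cast; ring
  rw [hlast, add_zero, ← Finset.sum_sub_distrib]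
  refine Finset.sum_congr rfl fun k hk => ?_
  simp only [Finset.mem_range] at hk
  have h1 : r - k + 1 = r + 1 - k := by omega
  rw [h1]
  have : ((r : ℝ) - k + 1) = ((r : ℝ) + 1) - k := by ring
  rw [this]
  ring
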